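/- An RGF w of length n avoids the pattern corresponding to the partition 1/2/3 if and only if w consists only of the letters 1 and 2. -/

import Mathlib

/-- The list of distinct letters of `u` in order of first occurrence. -/
def distinctsAux (u : List ℕ) : List ℕ :=
  u.foldl (fun acc x => if x ∈ acc then acc else acc ++ [x]) []

/-- The standardization of a word: relabel letters by order of first occurrence,
starting from `1`.  This is the restricted growth function of the set partition
determined by letter-equality, with blocks ordered by minima. -/
def stdWord (u : List ℕ) : List ℕ :=
  u.map (fun x => (distinctsAux u).idxOf x + 1)

/-- `w` is a restricted growth function: each letter is a positive integer,
the first letter is `1`, and every letter is at most one more than the maximum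
of the preceding letters. -/
def IsRGF (w : List ℕ) : Prop :=
  ∀ i : ℕ, ∀ h : i < w.length,
    1 ≤ w.get ⟨i, h⟩ ∧ w.get ⟨i, h⟩ ≤ ((w.take i).foldr max 0) + 1

/-- `w` avoids the pattern (RGF word) `v`: no subsequence of `w` standardizes to `v`.
This encodes set-partition pattern avoidance via the bijection with RGFs. -/
def AvoidsPat (w v : List ℕ) : Prop :=
  ¬ ∃ s : List ℕ, s.Sublist w ∧ stdWord s = v

lemma mem_foldl_distincts (u : List ℕ) :
    ∀ acc x, x ∈ u.foldl (fun acc x => if x ∈ acc then acc else acc ++ [x]) acc ↔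
      x ∈ acc ∨ x ∈ u := by
  induction u with
  | nil => simp
  | cons a t ih =>
    intro acc x
    simp only [List.foldl_cons]
    rw [ih]
    by_cases h : a ∈ acc <;> simp [h] <;> aesop

lemma mem_distinctsAux (u : List ℕ) (x : ℕ) : x ∈ distinctsAux u ↔ x ∈ u := by
  simp [distinctsAux, mem_foldl_distincts]

lemma nodup_foldl_distincts (u : List ℕ) :
    ∀ acc : List ℕ, acc.Nodup →
      (u.foldl (fun acc x => if x ∈ acc then acc else acc ++ [x]) acc).Nodup := by
  induction u with
  | nil => simp
  | cons a t ih =>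
    intro acc hacc
    simp only [List.foldl_cons]
    apply ih
    by_cases h : a ∈ acc <;> simp [h, hacc, List.nodup_append] <;> aesop

lemma nodup_distinctsAux (u : List ℕ) : (distinctsAux u).Nodup :=
  nodup_foldl_distincts u [] (by simp)

lemma exists_ge_of_le_foldr (l : List ℕ) (k : ℕ) (hk : 1 ≤ k)
    (h : k ≤ l.foldr max 0) : ∃ x ∈ l, k ≤ x := by
  induction l with
  | nil => simp at h; omega
  | cons a t ih =>
    simp only [List.foldr_cons, le_max_iff] at h
    rcases h with h | h
    · exact ⟨a, by simp, h⟩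
    · obtain ⟨x, hx, hkx⟩ := ih h
      exact ⟨x, by simp [hx], hkx⟩

lemma take_sub (w : List ℕ) (i j : ℕ) (h : j ≤ i) : (w.take j).Sublist (w.take i) := by
  have : w.take j <+: w.take i := by
    rw [List.prefix_take_iff]
    exact ⟨List.take_prefix _ _, by simp; omega⟩
  exact this.sublist

lemma rgf_mem (w : List ℕ) (hw : IsRGF w) :
    ∀ i, ∀ k, 1 ≤ k → k ≤ (w.take i).foldr max 0 → k ∈ w.take i := by
  intro i
  induction i using Nat.strong_induction_on with
  | _ i ih =>
    intro k hk hmax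
    obtain ⟨x, hxmem, hxk⟩ := exists_ge_of_le_foldr _ k hk hmax
    rcases eq_or_lt_of_le hxk with h | h
    · exact h ▸ hxmem
    · obtain ⟨⟨j, hj⟩, hjx⟩ := List.mem_iff_get.mp hxmem
      have hjlen : j < w.length := lt_of_lt_of_le hj (by simp [List.length_take])
      have hji : j < i := lt_of_lt_of_le hj (by simp [List.length_take])
      have hget : w.get ⟨j, hjlen⟩ = x := by
        rw [← hjx]; simp [List.getElem_take]
      have := (hw j hjlen).2
      rw [hget] at this
      have hmax' : k ≤ (w.take j).foldr max 0 := by omega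
      exact (take_sub w i j (le_of_lt hji)).subset (ih j hji k hk hmax')

lemma std_123 (x : ℕ) (hx : 3 ≤ x) : stdWord [1, 2, x] = [1, 2, 3] := by
  have h1 : x ≠ 1 := by omega
  have h2 : x ≠ 2 := by omega
  simp [stdWord, distinctsAux, h1, h2, List.idxOf_cons, beq_iff_eq,
    Ne.symm h1, Ne.symm h2, beq_eq_false_iff_ne, cond_eq_if]

lemma nodup_len_le (l : List ℕ) (hn : l.Nodup) (h : ∀ x ∈ l, x = 1 ∨ x = 2) :
    l.length ≤ 2 := by
  have h1 : l.toFinset ⊆ ({1, 2} : Finset ℕ) := by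
    intro x hx
    simp at hx
    rcases h x hx with h' | h' <;> simp [h']
  have := Finset.card_le_card h1
  simpa [List.toFinset_card_of_nodup hn] using this

/-- An RGF of length $n$ avoids the pattern $1/2/3$ (the RGF word `[1,2,3]`)
iff it consists only of the letters 1 and 2. -/
theorem stmt3 (n : ℕ) (w : List ℕ) (hw : IsRGF w) (hn : w.length = n) :
    AvoidsPat w [1, 2, 3] ↔ ∀ x ∈ w, x = 1 ∨ x = 2 := by
  constructor
  · intro havoid x hxw
    by_contra hx
    push_neg at hx
    obtain ⟨⟨i, hi⟩, hix⟩ := List.mem_iff_get.mp hxw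
    obtain ⟨hx1, hx2⟩ := hw i hi
    rw [hix] at hx1 hx2
    have hx3 : 3 ≤ x := by omega
    have h2mem : (2 : ℕ) ∈ w.take i := rgf_mem w hw i 2 (by omega) (by omega)
    obtain ⟨⟨j, hj⟩, hj2⟩ := List.mem_iff_get.mp h2mem
    have hjlen : j < w.length := lt_of_lt_of_le hj (by simp [List.length_take])
    have hji : j < i := lt_of_lt_of_le hj (by simp [List.length_take])
    have hgetj : w.get ⟨j, hjlen⟩ = 2 := by rw [← hj2]; simp [List.getElem_take]
    have hj2' := (hw j hjlen).2
    rw [hgetj] at hj2'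
    have h1mem : (1 : ℕ) ∈ w.take j := rgf_mem w hw j 1 le_rfl (by omega)
    -- build sublist [1, 2, x]
    have sub1 : [(1 : ℕ)].Sublist (w.take j) := List.singleton_sublist.mpr h1mem
    have takej : w.take (j + 1) = w.take j ++ [2] := by
      rw [List.take_succ]
      congr 1
      simp [List.getElem?_eq_getElem hjlen]
      exact hgetj
    have sub2 : [(1 : ℕ), 2].Sublist (w.take (j + 1)) := by
      rw [takej]
      exact List.Sublist.append sub1 (List.Sublist.refl _)
    have takei : w.take (i + 1) = w.take i ++ [x] := by
      rw [List.take_succ]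
      congr 1
      simp [List.getElem?_eq_getElem hi]
      exact hix
    have sub3 : [(1 : ℕ), 2, x].Sublist (w.take (i + 1)) := by
      rw [takei]
      exact List.Sublist.append (sub2.trans (take_sub w i (j + 1) hji)) (List.Sublist.refl _)
    exact havoid ⟨[1, 2, x], sub3.trans (List.take_sublist _ _), std_123 x hx3⟩
  · rintro h12 ⟨s, hsub, hstd⟩
    have hlen : s.length = 3 := by
      have := congrArg List.length hstd
      simpa [stdWord] using this
    match s, hlen with
    | [a, b, c], _ =>
      simp only [stdWord, List.map_cons, List.map_nil, List.cons.injEq, and_true] at hstd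
      obtain ⟨h1, h2, h3⟩ := hstd
      have hcmem : c ∈ distinctsAux [a, b, c] := (mem_distinctsAux _ c).mpr (by simp)
      have hidx : (distinctsAux [a, b, c]).idxOf c < (distinctsAux [a, b, c]).length :=
        List.idxOf_lt_length_iff.mpr hcmem
      have hle : (distinctsAux [a, b, c]).length ≤ 2 := by
        apply nodup_len_le _ (nodup_distinctsAux _)
        intro y hy
        exact h12 y (hsub.subset ((mem_distinctsAux _ y).mp hy))
      omega
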